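/- For any d ∈ (0, 2k], the plane ℝ² can be tessellated by congruent hexagonal regions of area d(2k - d/2), each contained in the closed ℓ¹-ball of radius k around its designated center, where centers on each vertical line x = j(2k - d/2) are spaced d apart vertically, with alternate columns offset by d/2. -/

import Mathlib

open MeasureTheory

def dist1 (p q : ℝ × ℝ) : ℝ := |p.1 - q.1| + |p.2 - q.2|

/-- Center of the cell indexed by `(i, j)`:
`(j·(2k - d/2), i·d + (j mod 2)·d/2)`. -/
noncomputable def center (k d : ℝ) (z : ℤ × ℤ) : ℝ × ℝ :=
  ((z.2 : ℝ) * (2*k - d/2), (z.1 : ℝ) * d + ((z.2 % 2 : ℤ) : ℝ) * (d/2))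

/-- canonical half-open hexagon around the origin -/
def hexBase (k d : ℝ) : Set (ℝ × ℝ) :=
  {q | (-(d/2) ≤ q.2 ∧ q.2 < d/2) ∧ (-(k - |q.2|) ≤ q.1 ∧ q.1 < k - |q.2|)}

noncomputable def hexCell (k d : ℝ) (z : ℤ × ℤ) : Set (ℝ × ℝ) :=
  (fun p => p + (-(center k d z))) ⁻¹' hexBase k d

lemma mem_hexCell {k d : ℝ} {z : ℤ × ℤ} {p : ℝ × ℝ} :
    p ∈ hexCell k d z ↔
      ((-(d/2) ≤ p.2 - (center k d z).2 ∧ p.2 - (center k d z).2 < d/2) ∧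
       (-(k - |p.2 - (center k d z).2|) ≤ p.1 - (center k d z).1 ∧
        p.1 - (center k d z).1 < k - |p.2 - (center k d z).2|)) := by
  show ((-(d/2) ≤ (p + -(center k d z)).2 ∧ _) ∧ _) ↔ _
  simp only [Prod.snd_add, Prod.fst_add, Prod.snd_neg, Prod.fst_neg, ← sub_eq_add_neg,
    Prod.fst_sub, Prod.snd_sub]

lemma floor_interval {t : ℝ} (ht : 0 < t) (x : ℝ) :
    -(t/2) ≤ x - (⌊(x + t/2)/t⌋ : ℝ) * t ∧ x - (⌊(x + t/2)/t⌋ : ℝ) * t < t/2 := by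
  have h1 : ((⌊(x + t/2)/t⌋ : ℝ)) * t ≤ x + t/2 := by
    have h := Int.floor_le ((x + t/2)/t)
    have := mul_le_mul_of_nonneg_right h ht.le
    rwa [div_mul_cancel₀ _ ht.ne'] at this
  have h2 : x + t/2 < ((⌊(x + t/2)/t⌋ : ℝ) + 1) * t := by
    have h := Int.lt_floor_add_one ((x + t/2)/t)
    have := mul_lt_mul_of_pos_right h ht
    rwa [div_mul_cancel₀ _ ht.ne'] at this
  constructor <;> nlinarith

lemma int_abs_lt_one {n : ℤ} (h : |(n : ℝ)| < 1) : n = 0 := by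
  by_contra hn
  have h1 : (1 : ℤ) ≤ |n| := Int.one_le_abs hn
  have : (1 : ℝ) ≤ |(n : ℝ)| := by
    rw [← Int.cast_abs]; exact_mod_cast h1
  linarith

lemma vdiff {d : ℝ} (hd1 : 0 < d) {v v' : ℝ} (mm : ℤ)
    (hodd : mm % 2 = 1 ∨ mm % 2 = -1)
    (hv1 : -(d/2) ≤ v) (hv2 : v < d/2) (hv1' : -(d/2) ≤ v') (hv2' : v' < d/2)
    (heq : v' - v = (mm:ℝ)*(d/2)) : |v'| = d/2 - |v| := by
  have hd2 : (0:ℝ) < d/2 := by linarith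
  have h1 : |v' - v| < d := abs_lt.mpr ⟨by linarith, by linarith⟩
  have habs : |(mm:ℝ)| * (d/2) < d := by
    rw [← abs_of_pos hd2, ← abs_mul, ← heq]; exact h1
  have h2 : |(mm:ℝ)| < 2 := by nlinarith [abs_nonneg (mm:ℝ)]
  obtain ⟨h2a, h2b⟩ := abs_lt.mp h2
  have h3a : (-2 : ℤ) < mm := by exact_mod_cast h2a
  have h3b : mm < (2 : ℤ) := by exact_mod_cast h2b
  have hcase : mm = 1 ∨ mm = -1 := by omega
  rcases hcase with h | h <;> subst h <;> push_cast at heq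
  · have hvneg : v < 0 := by linarith
    have hv'pos : 0 ≤ v' := by linarith
    rw [abs_of_nonneg hv'pos, abs_of_neg hvneg]; linarith
  · have hvpos : 0 ≤ v := by linarith
    have hv'neg : v' < 0 := by linarith
    rw [abs_of_neg hv'neg, abs_of_nonneg hvpos]; linarith

/-- a point lies in at most one hexCell -/
lemma hex_unique (k d : ℝ) (hk : 0 < k) (hd1 : 0 < d) (hd2 : d ≤ 2*k)
    {z z' : ℤ × ℤ} {p : ℝ × ℝ} (h : p ∈ hexCell k d z) (h' : p ∈ hexCell k d z') :
    z = z' := by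
  obtain ⟨i, j⟩ := z
  obtain ⟨i', j'⟩ := z'
  rw [mem_hexCell] at h h'
  simp only [center] at h h'
  set u := p.1 - (j : ℝ) * (2*k - d/2) with hu_def
  set v := p.2 - ((i : ℝ) * d + ((j % 2 : ℤ) : ℝ) * (d/2)) with hv_def
  set u' := p.1 - (j' : ℝ) * (2*k - d/2) with hu'_def
  set v' := p.2 - ((i' : ℝ) * d + ((j' % 2 : ℤ) : ℝ) * (d/2)) with hv'_def
  have huu : u - u' = ((j' - j : ℤ) : ℝ) * (2*k - d/2) := by
    rw [hu_def, hu'_def]; push_cast; ring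
  have hvv : v - v' = ((i' - i : ℤ) : ℝ) * d + ((j' % 2 - j % 2 : ℤ) : ℝ) * (d/2) := by
    rw [hv_def, hv'_def]; push_cast; ring
  clear_value u v u' v'
  obtain ⟨⟨hv1, hv2⟩, ⟨hu1, hu2⟩⟩ := h
  obtain ⟨⟨hv1', hv2'⟩, ⟨hu1', hu2'⟩⟩ := h'
  have hw : (0:ℝ) < 2*k - d/2 := by linarith
  have hs1 : u - u' < 2*k - |v| - |v'| := by
    have := le_abs_self v; have := neg_abs_le v'
    linarith
  have hs2 : u' - u < 2*k - |v| - |v'| := by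
    have := le_abs_self v'; have := neg_abs_le v
    linarith
  have habsv : |v| ≤ d/2 := abs_le.mpr ⟨hv1, hv2.le⟩
  have habsv' : |v'| ≤ d/2 := abs_le.mpr ⟨hv1', hv2'.le⟩
  have hcase : j' - j = 0 ∨ j' - j = 1 ∨ j' - j = -1 ∨ 2 ≤ j' - j ∨ j' - j ≤ -2 := by omega
  have hvvle : |v - v'| ≤ |v| + |v'| := by
    refine abs_le.mpr ⟨?_, ?_⟩
    · have := neg_abs_le v; have := le_abs_self v'; linarith
    · have := le_abs_self v; have := neg_abs_le v'; linarith
  rcases hcase with hm | hm | hm | hm | hm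
  · -- same column
    have hj : j = j' := by omega
    have hp : j' % 2 - j % 2 = 0 := by omega
    rw [hp] at hvv
    have hvv2 : v - v' = ((i' - i : ℤ) : ℝ) * d := by rw [hvv]; push_cast; ring
    have hlt : |v - v'| < d := abs_lt.mpr ⟨by linarith, by linarith⟩
    rw [hvv2, abs_mul, abs_of_pos hd1] at hlt
    have : |((i' - i : ℤ) : ℝ)| < 1 := (mul_lt_mul_iff_left₀ hd1).mp (by linarith)
    have hi : i' - i = 0 := int_abs_lt_one this
    have : i = i' := by omega
    simp [this, hj]
  · -- adjacent, exfalso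
    exfalso
    have hp : j' % 2 - j % 2 = 1 ∨ j' % 2 - j % 2 = -1 := by omega
    have hmm : 2*(i' - i) + (j' % 2 - j % 2) ≠ 0 := by omega
    have hvv2 : v - v' = ((2*(i' - i) + (j' % 2 - j % 2) : ℤ) : ℝ) * (d/2) := by
      rw [hvv]; push_cast; ring
    have hge : (1:ℝ) ≤ |((2*(i' - i) + (j' % 2 - j % 2) : ℤ) : ℝ)| := by
      rw [← Int.cast_abs]; exact_mod_cast Int.one_le_abs hmm
    have hvvge : d/2 ≤ |v - v'| := by
      rw [hvv2, abs_mul, abs_of_pos (show (0:ℝ) < d/2 by linarith)]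
      nlinarith
    have huueq : u - u' = 2*k - d/2 := by rw [huu, hm]; push_cast; ring
    linarith
  · exfalso
    have hp : j' % 2 - j % 2 = 1 ∨ j' % 2 - j % 2 = -1 := by omega
    have hmm : 2*(i' - i) + (j' % 2 - j % 2) ≠ 0 := by omega
    have hvv2 : v - v' = ((2*(i' - i) + (j' % 2 - j % 2) : ℤ) : ℝ) * (d/2) := by
      rw [hvv]; push_cast; ring
    have hge : (1:ℝ) ≤ |((2*(i' - i) + (j' % 2 - j % 2) : ℤ) : ℝ)| := by
      rw [← Int.cast_abs]; exact_mod_cast Int.one_le_abs hmm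
    have hvvge : d/2 ≤ |v - v'| := by
      rw [hvv2, abs_mul, abs_of_pos (show (0:ℝ) < d/2 by linarith)]
      nlinarith
    have huueq : u' - u = 2*k - d/2 := by
      have : u - u' = -(2*k - d/2) := by rw [huu, hm]; push_cast; ring
      linarith
    linarith
  · exfalso
    have h2 : (2:ℝ) ≤ ((j' - j : ℤ) : ℝ) := by exact_mod_cast hm
    have hmul : 2*(2*k - d/2) ≤ ((j' - j : ℤ) : ℝ)*(2*k - d/2) :=
      mul_le_mul_of_nonneg_right h2 hw.le
    rw [← huu] at hmul
    have := abs_nonneg v; have := abs_nonneg v'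
    linarith
  · exfalso
    have h2 : ((j' - j : ℤ) : ℝ) ≤ -2 := by exact_mod_cast hm
    have hmul : ((j' - j : ℤ) : ℝ)*(2*k - d/2) ≤ (-2)*(2*k - d/2) :=
      mul_le_mul_of_nonneg_right h2 hw.le
    rw [← huu] at hmul
    have := abs_nonneg v; have := abs_nonneg v'
    linarith

/-- every point lies in some hexCell -/
lemma hex_cover (k d : ℝ) (hk : 0 < k) (hd1 : 0 < d) (hd2 : d ≤ 2*k) (p : ℝ × ℝ) :
    ∃ z, p ∈ hexCell k d z := by
  obtain ⟨x, y⟩ := p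
  have hw : (0:ℝ) < 2*k - d/2 := by linarith
  -- row index for any column j
  have key : ∀ j : ℤ, ∃ i : ℤ,
      -(d/2) ≤ y - ((i:ℝ)*d + ((j % 2 : ℤ):ℝ)*(d/2)) ∧
      y - ((i:ℝ)*d + ((j % 2 : ℤ):ℝ)*(d/2)) < d/2 := by
    intro j
    obtain ⟨h1, h2⟩ := floor_interval hd1 (y - ((j % 2 : ℤ):ℝ)*(d/2))
    exact ⟨⌊(y - ((j % 2 : ℤ):ℝ)*(d/2) + d/2)/d⌋, by linarith, by linarith⟩
  set j0 : ℤ := ⌊(x + (2*k - d/2)/2)/(2*k - d/2)⌋ with hj0_def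
  obtain ⟨hu01, hu02⟩ := floor_interval hw x
  rw [← hj0_def] at hu01 hu02
  obtain ⟨i0, hv01, hv02⟩ := key j0
  set v0 := y - ((i0:ℝ)*d + ((j0 % 2 : ℤ):ℝ)*(d/2)) with hv0_def
  set u0 := x - (j0:ℝ)*(2*k - d/2) with hu0_def
  clear_value j0 v0 u0
  have habs0 : |v0| ≤ d/2 := abs_le.mpr ⟨hv01, hv02.le⟩
  by_cases hR : u0 < k - |v0|
  · by_cases hL : -(k - |v0|) ≤ u0
    · -- point in column j0
      refine ⟨(i0, j0), mem_hexCell.mpr ⟨⟨?_, ?_⟩, ⟨?_, ?_⟩⟩⟩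
      · show -(d/2) ≤ y - ((i0:ℝ)*d + ((j0 % 2 : ℤ):ℝ)*(d/2))
        rw [← hv0_def]; exact hv01
      · show y - ((i0:ℝ)*d + ((j0 % 2 : ℤ):ℝ)*(d/2)) < d/2
        rw [← hv0_def]; exact hv02
      · show -(k - |y - ((i0:ℝ)*d + ((j0 % 2 : ℤ):ℝ)*(d/2))|) ≤ x - (j0:ℝ)*(2*k - d/2)
        rw [← hv0_def, ← hu0_def]; exact hL
      · show x - (j0:ℝ)*(2*k - d/2) < k - |y - ((i0:ℝ)*d + ((j0 % 2 : ℤ):ℝ)*(d/2))|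
        rw [← hv0_def, ← hu0_def]; exact hR
    · -- move left, column j0 - 1
      push_neg at hL
      obtain ⟨i1, hv11, hv12⟩ := key (j0 - 1)
      set v1 := y - ((i1:ℝ)*d + (((j0-1) % 2 : ℤ):ℝ)*(d/2)) with hv1_def
      clear_value v1
      have heq : v1 - v0 = ((2*(i0 - i1) + (j0 % 2 - (j0-1) % 2) : ℤ):ℝ)*(d/2) := by
        rw [hv1_def, hv0_def]; push_cast; ring
      have hodd : (2*(i0 - i1) + (j0 % 2 - (j0-1) % 2)) % 2 = 1 ∨
          (2*(i0 - i1) + (j0 % 2 - (j0-1) % 2)) % 2 = -1 := by omega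
      have habs1 : |v1| = d/2 - |v0| :=
        vdiff hd1 _ hodd hv01 hv02 hv11 hv12 heq
      refine ⟨(i1, j0 - 1), mem_hexCell.mpr ⟨⟨?_, ?_⟩, ⟨?_, ?_⟩⟩⟩
      · show -(d/2) ≤ y - (center k d (i1, j0-1)).2
        simp only [center]; push_cast; push_cast at hv11; linarith
      · show y - (center k d (i1, j0-1)).2 < d/2
        simp only [center]; push_cast; push_cast at hv12; linarith
      · show -(k - |y - (center k d (i1, j0-1)).2|) ≤ x - (center k d (i1, j0-1)).1
        simp only [center]
        have e1 : y - ((i1:ℝ)*d + (((j0-1) % 2 : ℤ):ℝ)*(d/2)) = v1 := by rw [hv1_def]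
        push_cast [e1, habs1]
        have := abs_nonneg v0
        push_cast at hu01 ⊢
        linarith
      · show x - (center k d (i1, j0-1)).1 < k - |y - (center k d (i1, j0-1)).2|
        simp only [center]
        have e1 : y - ((i1:ℝ)*d + (((j0-1) % 2 : ℤ):ℝ)*(d/2)) = v1 := by rw [hv1_def]
        push_cast [e1, habs1]
        have hx : x - ((j0:ℝ) - 1)*(2*k - d/2) = u0 + (2*k - d/2) := by rw [hu0_def]; ring
        linarith
  · -- move right, column j0 + 1
    push_neg at hR
    obtain ⟨i1, hv11, hv12⟩ := key (j0 + 1)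
    set v1 := y - ((i1:ℝ)*d + (((j0+1) % 2 : ℤ):ℝ)*(d/2)) with hv1_def
    clear_value v1
    have heq : v1 - v0 = ((2*(i0 - i1) + (j0 % 2 - (j0+1) % 2) : ℤ):ℝ)*(d/2) := by
      rw [hv1_def, hv0_def]; push_cast; ring
    have hodd : (2*(i0 - i1) + (j0 % 2 - (j0+1) % 2)) % 2 = 1 ∨
        (2*(i0 - i1) + (j0 % 2 - (j0+1) % 2)) % 2 = -1 := by omega
    have habs1 : |v1| = d/2 - |v0| :=
      vdiff hd1 _ hodd hv01 hv02 hv11 hv12 heq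
    refine ⟨(i1, j0 + 1), mem_hexCell.mpr ⟨⟨?_, ?_⟩, ⟨?_, ?_⟩⟩⟩
    · show -(d/2) ≤ y - (center k d (i1, j0+1)).2
      simp only [center]; push_cast; push_cast at hv11; linarith
    · show y - (center k d (i1, j0+1)).2 < d/2
      simp only [center]; push_cast; push_cast at hv12; linarith
    · show -(k - |y - (center k d (i1, j0+1)).2|) ≤ x - (center k d (i1, j0+1)).1
      simp only [center]
      have e1 : y - ((i1:ℝ)*d + (((j0+1) % 2 : ℤ):ℝ)*(d/2)) = v1 := by rw [hv1_def]
      push_cast [e1, habs1]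
      have hx : x - ((j0:ℝ) + 1)*(2*k - d/2) = u0 - (2*k - d/2) := by rw [hu0_def]; ring
      linarith
    · show x - (center k d (i1, j0+1)).1 < k - |y - (center k d (i1, j0+1)).2|
      simp only [center]
      have e1 : y - ((i1:ℝ)*d + (((j0+1) % 2 : ℤ):ℝ)*(d/2)) = v1 := by rw [hv1_def]
      push_cast [e1, habs1]
      have := abs_nonneg v0
      push_cast at hu02 ⊢
      linarith


lemma hex_volume (k d : ℝ) (hk : 0 < k) (hd1 : 0 < d) (hd2 : d ≤ 2*k) (z : ℤ × ℤ) :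
    volume (hexCell k d z) = ENNReal.ofReal (d*(2*k - d/2)) := by
  rw [hexCell, measure_preimage_add_right]
  have hmeas : MeasurableSet (hexBase k d) := by
    apply MeasurableSet.inter
    · exact MeasurableSet.inter (measurableSet_le measurable_const measurable_snd)
        (measurableSet_lt measurable_snd measurable_const)
    · exact MeasurableSet.inter
        (measurableSet_le ((measurable_const.sub measurable_snd.abs).neg) measurable_fst)
        (measurableSet_lt measurable_fst (measurable_const.sub measurable_snd.abs))
  rw [MeasureTheory.Measure.volume_eq_prod, Measure.prod_apply_symm hmeas]
  have hsec : ∀ v : ℝ, (volume ((fun u => (u, v)) ⁻¹' hexBase k d))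
      = Set.indicator (Set.Ico (-(d/2)) (d/2)) (fun v => ENNReal.ofReal (2*(k - |v|))) v := by
    intro v
    by_cases hv : v ∈ Set.Ico (-(d/2)) (d/2)
    · rw [Set.indicator_of_mem hv]
      have : ((fun u => (u, v)) ⁻¹' hexBase k d) = Set.Ico (-(k - |v|)) (k - |v|) := by
        ext u
        simp only [hexBase, Set.mem_preimage, Set.mem_setOf_eq, Set.mem_Ico]
        constructor
        · rintro ⟨_, h2⟩; exact h2
        · intro h; exact ⟨⟨hv.1, hv.2⟩, h⟩
      rw [this, Real.volume_Ico]
      congr 1; ring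
    · rw [Set.indicator_of_notMem hv]
      have : ((fun u => (u, v)) ⁻¹' hexBase k d) = ∅ := by
        ext u
        simp only [hexBase, Set.mem_preimage, Set.mem_setOf_eq, Set.mem_empty_iff_false, iff_false]
        rintro ⟨h1, _⟩
        exact hv ⟨h1.1, h1.2⟩
      rw [this]; simp
  simp_rw [hsec]
  rw [lintegral_indicator measurableSet_Ico]
  have hnn : 0 ≤ᶠ[ae (volume.restrict (Set.Ico (-(d/2)) (d/2)))] fun v => 2*(k - |v|) := by
    rw [Filter.EventuallyLE, ae_restrict_iff' measurableSet_Ico]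
    filter_upwards with v hv
    have : |v| ≤ d/2 := by
      rw [abs_le]; exact ⟨hv.1, le_of_lt hv.2⟩
    simp only [Pi.zero_apply]
    nlinarith
  have hint : IntegrableOn (fun v => 2*(k - |v|)) (Set.Ico (-(d/2)) (d/2)) := by
    exact ((continuous_const.mul (continuous_const.sub continuous_abs)).integrableOn_Icc).mono_set
      Set.Ico_subset_Icc_self
  rw [← MeasureTheory.ofReal_integral_eq_lintegral_ofReal hint hnn]
  congr 1
  have hcont : Continuous (fun v : ℝ => 2 * (k - |v|)) :=
    continuous_const.mul (continuous_const.sub continuous_abs)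
  rw [MeasureTheory.integral_Ico_eq_integral_Ioo, ← integral_Ioc_eq_integral_Ioo,
    ← intervalIntegral.integral_of_le (by linarith : -(d/2) ≤ d/2)]
  rw [← intervalIntegral.integral_add_adjacent_intervals (b := 0)
    (hcont.intervalIntegrable _ _) (hcont.intervalIntegrable _ _)]
  have h1 : ∫ v in (-(d/2))..0, 2*(k - |v|) = ∫ v in (-(d/2))..0, (2*k + 2*v) := by
    apply intervalIntegral.integral_congr
    intro v hv
    rw [Set.uIcc_of_le (by linarith)] at hv
    simp only [abs_of_nonpos hv.2]; ring
  have h2 : ∫ v in (0:ℝ)..(d/2), 2*(k - |v|) = ∫ v in (0:ℝ)..(d/2), (2*k + (-2)*v) := by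
    apply intervalIntegral.integral_congr
    intro v hv
    rw [Set.uIcc_of_le (by linarith)] at hv
    simp only [abs_of_nonneg hv.1]; ring
  have lin_int : ∀ a b c e : ℝ, ∫ v in a..b, (c + e*v) = c*(b-a) + e*((b^2-a^2)/2) := by
    intro a b c e
    rw [intervalIntegral.integral_add (intervalIntegrable_const (c := c))
      ((intervalIntegral.intervalIntegrable_id).const_mul e),
      intervalIntegral.integral_const, intervalIntegral.integral_const_mul, integral_id]
    simp [smul_eq_mul]; ring
  rw [h1, h2, lin_int, lin_int]
  ring

theorem stmt18 (k d : ℝ) (hk : 0 < k) (hd1 : 0 < d) (hd2 : d ≤ 2*k) :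
    ∃ cell : ℤ × ℤ → Set (ℝ × ℝ),
      (⋃ z, cell z) = Set.univ ∧
      (∀ z w : ℤ × ℤ, z ≠ w → Disjoint (cell z) (cell w)) ∧
      ∀ z : ℤ × ℤ,
        volume (cell z) = ENNReal.ofReal (d*(2*k - d/2)) ∧
        cell z ⊆ {p : ℝ × ℝ | dist1 p (center k d z) ≤ k} := by
  refine ⟨hexCell k d, ?_, ?_, ?_⟩
  · rw [Set.eq_univ_iff_forall]
    intro p
    rw [Set.mem_iUnion]
    exact hex_cover k d hk hd1 hd2 p
  · intro z w hzw
    rw [Set.disjoint_left]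
    intro p hp hp'
    exact hzw (hex_unique k d hk hd1 hd2 hp hp')
  · intro z
    refine ⟨hex_volume k d hk hd1 hd2 z, ?_⟩
    intro p hp
    rw [mem_hexCell] at hp
    obtain ⟨⟨hv1, hv2⟩, hu1, hu2⟩ := hp
    have habsv : |p.2 - (center k d z).2| ≤ d/2 := abs_le.mpr ⟨hv1, hv2.le⟩
    have habsu : |p.1 - (center k d z).1| ≤ k - |p.2 - (center k d z).2| := by
      rw [abs_le]; exact ⟨hu1, hu2.le⟩
    simp only [Set.mem_setOf_eq, dist1]
    linarith
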